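/- arXiv:math-ph/0304019 — 2 statements merged into one kernel-verified Lean document; each statement's English description precedes it below -/
import Mathlib

section
/- Let u : [0,∞) → [0,1] be C¹ with bounded derivative, and let R_3 = {(y,z) ∈ ℝ³×ℝ³ : |y| ≤ |z|, |z| > R/2, |y−z| < R/4}. Then there exists c such that for all ε > 0, ∫∫_{R_3} |φ(y)||φ(z)|/|y−z|⁴ · |u(|y|/R)−u(|z|/R)|² dy dz ≤ (cε/R)‖φ‖² + (c/(εR)) ‖φ·χ(|z|>R/4)‖² for all φ ∈ L²(ℝ³). -/
open MeasureTheory Real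

noncomputable section

abbrev E3 := EuclideanSpace ℝ (Fin 3)

open scoped ENNReal NNReal

lemma ball_inv_sq_lintegral {q : ℝ} (hq : 0 < q) :
    ∫⁻ w : E3 in Metric.ball 0 q, ENNReal.ofReal ((‖w‖ ^ 2)⁻¹)
      ≤ ENNReal.ofReal (8 * q) * volume (Metric.ball (0 : E3) 1) := by
  set V := volume (Metric.ball (0 : E3) 1) with hV
  set A : ℕ → Set E3 := fun n =>
    Metric.ball 0 (q * (1/2) ^ n) \ Metric.ball 0 (q * (1/2) ^ (n+1)) with hA
  have hcov : Metric.ball (0 : E3) q \ ({0} : Set E3) ⊆ ⋃ n, A n := by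
    rintro w ⟨hw1, hw2⟩
    have hw0 : (0:ℝ) < ‖w‖ := by
      simp only [Set.mem_singleton_iff] at hw2
      exact norm_pos_iff.2 hw2
    have hwq : ‖w‖ < q := by simpa [Metric.mem_ball, dist_zero_right] using hw1
    have hex : ∃ n : ℕ, q * (1/2) ^ n ≤ ‖w‖ := by
      obtain ⟨n, hn⟩ := exists_pow_lt_of_lt_one (div_pos hw0 hq) (by norm_num : (1/2:ℝ) < 1)
      have := (lt_div_iff₀ hq).1 hn
      exact ⟨n, by linarith⟩
    classical
    have h₀ : q * (1/2) ^ (Nat.find hex) ≤ ‖w‖ := Nat.find_spec hex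
    have hne : Nat.find hex ≠ 0 := by
      intro h
      rw [h] at h₀; simp at h₀; linarith
    obtain ⟨m, hm0⟩ := Nat.exists_eq_succ_of_ne_zero hne
    rw [hm0] at h₀
    have hm : ¬ (q * (1/2) ^ m ≤ ‖w‖) := by
      have := Nat.find_min hex (show m < Nat.find hex by omega)
      exact this
    refine Set.mem_iUnion.2 ⟨m, ?_, ?_⟩
    · simp only [Metric.mem_ball, dist_zero_right]; push_neg at hm; exact hm
    · simp only [Metric.mem_ball, dist_zero_right, not_lt]
      exact h₀
  have hsing : Metric.ball (0 : E3) q \ ({0} : Set E3) =ᵐ[volume] Metric.ball (0 : E3) q := by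
    refine diff_ae_eq_self.2 ?_
    exact measure_mono_null Set.inter_subset_right (measure_singleton _)
  calc ∫⁻ w : E3 in Metric.ball 0 q, ENNReal.ofReal ((‖w‖ ^ 2)⁻¹)
      = ∫⁻ w : E3 in Metric.ball (0:E3) q \ ({0} : Set E3), ENNReal.ofReal ((‖w‖ ^ 2)⁻¹) :=
        (setLIntegral_congr hsing).symm
    _ ≤ ∫⁻ w : E3 in ⋃ n, A n, ENNReal.ofReal ((‖w‖ ^ 2)⁻¹) := lintegral_mono_set hcov
    _ ≤ ∑' n, ∫⁻ w : E3 in A n, ENNReal.ofReal ((‖w‖ ^ 2)⁻¹) := lintegral_iUnion_le _ _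
    _ ≤ ∑' n, ENNReal.ofReal (4 * q * (1/2) ^ n) * V := by
        refine ENNReal.tsum_le_tsum fun n => ?_
        have hr : (0:ℝ) < q * (1/2) ^ (n+1) := by positivity
        have hstep : ∫⁻ w : E3 in A n, ENNReal.ofReal ((‖w‖ ^ 2)⁻¹)
            ≤ ENNReal.ofReal (((q * (1/2) ^ (n+1)) ^ 2)⁻¹) * volume (A n) := by
          rw [← setLIntegral_const]
          refine setLIntegral_mono measurable_const fun w hw => ?_
          have hlow : q * (1/2) ^ (n+1) ≤ ‖w‖ := by
            have := hw.2
            simp only [Metric.mem_ball, dist_zero_right, not_lt] at this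
            exact this
          exact ENNReal.ofReal_le_ofReal
            (inv_anti₀ (by positivity) (by nlinarith))
        refine hstep.trans ?_
        have hvol : volume (A n) ≤ ENNReal.ofReal ((q * (1/2) ^ n) ^ 3) * V := by
          refine (measure_mono Set.diff_subset).trans ?_
          rw [Measure.addHaar_ball _ _ (by positivity)]
          simp [finrank_euclideanSpace_fin, hV]
        calc ENNReal.ofReal (((q * (1/2) ^ (n+1)) ^ 2)⁻¹) * volume (A n)
            ≤ ENNReal.ofReal (((q * (1/2) ^ (n+1)) ^ 2)⁻¹) *
              (ENNReal.ofReal ((q * (1/2) ^ n) ^ 3) * V) := by gcongr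
          _ = ENNReal.ofReal (((q * (1/2) ^ (n+1)) ^ 2)⁻¹ * (q * (1/2) ^ n) ^ 3) * V := by
              rw [ENNReal.ofReal_mul (by positivity), mul_assoc]
          _ = ENNReal.ofReal (4 * q * (1/2) ^ n) * V := by
              congr 2
              have ht : (0:ℝ) < (1/2:ℝ) ^ n := by positivity
              rw [pow_succ]
              field_simp
              ring
    _ = ENNReal.ofReal (8 * q) * V := by
        have h1 : ∀ n : ℕ, ENNReal.ofReal (4 * q * (1/2) ^ n)
            = ENNReal.ofReal (4 * q) * (2⁻¹ : ℝ≥0∞) ^ n := by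
          intro n
          rw [ENNReal.ofReal_mul (by positivity), ENNReal.ofReal_pow (by norm_num)]
          congr 1
          rw [ENNReal.ofReal_div_of_pos (by norm_num)]
          norm_num
        simp_rw [h1]
        rw [ENNReal.tsum_mul_right, ENNReal.tsum_mul_left, ENNReal.tsum_geometric]
        rw [ENNReal.one_sub_inv_two, inv_inv,
          show (4:ℝ) * q = q * 4 by ring, show (8:ℝ) * q = q * 8 by ring,
          ENNReal.ofReal_mul hq.le, ENNReal.ofReal_mul hq.le,
          ENNReal.ofReal_ofNat, ENNReal.ofReal_ofNat]
        ring

set_option maxHeartbeats 1000000 in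
lemma key_estimate (L : ℝ) (hL0 : 0 ≤ L) (u : ℝ → ℝ)
    (hlip : LipschitzWith L.toNNReal u)
    {R ε : ℝ} (hR : 0 < R) (hε : 0 < ε) (φ : E3 → ℂ)
    (hm : StronglyMeasurable φ) (hφ : MemLp φ 2) :
    ∫ p in {p : E3 × E3 | ‖p.1‖ ≤ ‖p.2‖ ∧ R / 2 < ‖p.2‖ ∧ ‖p.1 - p.2‖ < R / 4},
        ‖φ p.1‖ * ‖φ p.2‖ / ‖p.1 - p.2‖ ^ 4 * (u (‖p.1‖ / R) - u (‖p.2‖ / R)) ^ 2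
    ≤ ((L ^ 2 * (volume (Metric.ball (0 : E3) 1)).toReal + 1) * ε / R) * (∫ y : E3, ‖φ y‖ ^ 2)
        + ((L ^ 2 * (volume (Metric.ball (0 : E3) 1)).toReal + 1) / (ε * R))
          * ∫ z in {z : E3 | R / 4 < ‖z‖}, ‖φ z‖ ^ 2 := by
  set Vr := (volume (Metric.ball (0 : E3) 1)).toReal with hVr
  have hVr0 : 0 ≤ Vr := ENNReal.toReal_nonneg
  set S : Set (E3 × E3) :=
    {p : E3 × E3 | ‖p.1‖ ≤ ‖p.2‖ ∧ R / 2 < ‖p.2‖ ∧ ‖p.1 - p.2‖ < R / 4} with hS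
  set f : E3 × E3 → ℝ := fun p =>
    ‖φ p.1‖ * ‖φ p.2‖ / ‖p.1 - p.2‖ ^ 4 * (u (‖p.1‖ / R) - u (‖p.2‖ / R)) ^ 2 with hf
  have hφn : Measurable fun y : E3 => ‖φ y‖ := hm.measurable.norm
  set A : E3 → ℝ≥0∞ := fun y => ENNReal.ofReal (‖φ y‖ ^ 2) with hAdef
  have hA_meas : Measurable A := ENNReal.measurable_ofReal.comp (hφn.pow_const 2)
  set U : Set E3 := {z : E3 | R / 4 < ‖z‖} with hU
  have hU_meas : MeasurableSet U := measurableSet_lt measurable_const measurable_norm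
  set G : E3 → ℝ≥0∞ := fun w =>
    (Metric.ball (0 : E3) (R / 4)).indicator (fun w => ENNReal.ofReal ((‖w‖ ^ 2)⁻¹)) w with hGdef
  have hG_meas : Measurable G :=
    (ENNReal.measurable_ofReal.comp ((measurable_norm.pow_const 2).inv)).indicator
      measurableSet_ball
  set c1 : ℝ≥0∞ := ENNReal.ofReal (L ^ 2 / (2 * R ^ 2) * ε) with hc1
  set c2 : ℝ≥0∞ := ENNReal.ofReal (L ^ 2 / (2 * R ^ 2) * ε⁻¹) with hc2
  set H1 : E3 × E3 → ℝ≥0∞ := fun p => c1 * A p.1 * G (p.1 - p.2) with hH1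
  set H2 : E3 × E3 → ℝ≥0∞ := fun p => c2 * U.indicator A p.2 * G (p.1 - p.2) with hH2
  have hGsub : Measurable fun p : E3 × E3 => G (p.1 - p.2) :=
    hG_meas.comp (measurable_fst.sub measurable_snd)
  have hm1 : Measurable H1 := ((measurable_const.mul (hA_meas.comp measurable_fst))).mul hGsub
  have hm2 : Measurable H2 :=
    ((measurable_const.mul ((hA_meas.indicator hU_meas).comp measurable_snd))).mul hGsub
  -- pointwise bound on S
  have hpoint : ∀ p ∈ S, ENNReal.ofReal (f p) ≤ H1 p + H2 p := by
    rintro ⟨y, z⟩ ⟨h1, h2, h3⟩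
    have hz4 : R / 4 < ‖z‖ := by linarith
    have hGyz : G (y - z) = ENNReal.ofReal ((‖y - z‖ ^ 2)⁻¹) := by
      rw [hGdef]
      exact Set.indicator_of_mem (by simpa [Metric.mem_ball, dist_zero_right] using h3) _
    have hIndz : U.indicator A z = A z := Set.indicator_of_mem (show z ∈ U from hz4) A
    have hamgm : ‖φ y‖ * ‖φ z‖ ≤ (ε * ‖φ y‖ ^ 2 + ε⁻¹ * ‖φ z‖ ^ 2) / 2 := by
      nlinarith [mul_nonneg (inv_pos.2 hε).le (sq_nonneg (ε * ‖φ y‖ - ‖φ z‖)),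
        mul_inv_cancel₀ hε.ne', norm_nonneg (φ y), norm_nonneg (φ z), hε.le]
    have hreal : f (y, z) ≤ (L ^ 2 / (2 * R ^ 2) * ε * ‖φ y‖ ^ 2
        + L ^ 2 / (2 * R ^ 2) * ε⁻¹ * ‖φ z‖ ^ 2) * ((‖y - z‖ ^ 2)⁻¹) := by
      rcases eq_or_ne (y - z) 0 with hd0 | hd0
      · have hyz : y = z := sub_eq_zero.1 hd0
        have : f (y, z) = 0 := by
          simp only [hf, hyz, sub_self]
          ring
        rw [this]
        positivity
      · have hd : 0 < ‖y - z‖ := norm_pos_iff.2 hd0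
        have hlip' : |u (‖y‖ / R) - u (‖z‖ / R)| ≤ L * (‖y - z‖ / R) := by
          have h := hlip.dist_le_mul (‖y‖ / R) (‖z‖ / R)
          rw [Real.dist_eq, Real.dist_eq, Real.coe_toNNReal L hL0] at h
          refine h.trans ?_
          have habs : |‖y‖ / R - ‖z‖ / R| ≤ ‖y - z‖ / R := by
            rw [div_sub_div_same, abs_div, abs_of_pos hR]
            gcongr
            exact abs_norm_sub_norm_le y z
          exact mul_le_mul_of_nonneg_left habs hL0
        have hsq : (u (‖y‖ / R) - u (‖z‖ / R)) ^ 2 ≤ L ^ 2 * ‖y - z‖ ^ 2 / R ^ 2 := by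
          have h2 := mul_self_le_mul_self (abs_nonneg (u (‖y‖ / R) - u (‖z‖ / R))) hlip'
          calc (u (‖y‖ / R) - u (‖z‖ / R)) ^ 2
              = |u (‖y‖ / R) - u (‖z‖ / R)| * |u (‖y‖ / R) - u (‖z‖ / R)| := by
                rw [abs_mul_abs_self, sq]
            _ ≤ (L * (‖y - z‖ / R)) * (L * (‖y - z‖ / R)) := h2
            _ = L ^ 2 * ‖y - z‖ ^ 2 / R ^ 2 := by field_simp
        calc f (y, z)
            ≤ ‖φ y‖ * ‖φ z‖ / ‖y - z‖ ^ 4 * (L ^ 2 * ‖y - z‖ ^ 2 / R ^ 2) := by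
              refine mul_le_mul_of_nonneg_left hsq (by positivity)
          _ = L ^ 2 / R ^ 2 * (‖φ y‖ * ‖φ z‖) * ((‖y - z‖ ^ 2)⁻¹) := by
              field_simp
          _ ≤ L ^ 2 / R ^ 2 * ((ε * ‖φ y‖ ^ 2 + ε⁻¹ * ‖φ z‖ ^ 2) / 2) * ((‖y - z‖ ^ 2)⁻¹) := by
              gcongr
          _ = (L ^ 2 / (2 * R ^ 2) * ε * ‖φ y‖ ^ 2
              + L ^ 2 / (2 * R ^ 2) * ε⁻¹ * ‖φ z‖ ^ 2) * ((‖y - z‖ ^ 2)⁻¹) := by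
              ring
    calc ENNReal.ofReal (f (y, z))
        ≤ ENNReal.ofReal ((L ^ 2 / (2 * R ^ 2) * ε * ‖φ y‖ ^ 2
            + L ^ 2 / (2 * R ^ 2) * ε⁻¹ * ‖φ z‖ ^ 2) * ((‖y - z‖ ^ 2)⁻¹)) :=
          ENNReal.ofReal_le_ofReal hreal
      _ = H1 (y, z) + H2 (y, z) := by
          have hsplit : ∀ a s t : ℝ, 0 ≤ a → 0 ≤ s → 0 ≤ t →
              ENNReal.ofReal (a * s * t)
                = ENNReal.ofReal a * ENNReal.ofReal s * ENNReal.ofReal t := by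
            intro a s t ha hs ht
            rw [ENNReal.ofReal_mul (mul_nonneg ha hs), ENNReal.ofReal_mul ha]
          simp only [hH1, hH2, hGyz, hIndz]
          simp only [hAdef, hc1, hc2]
          rw [add_mul, ENNReal.ofReal_add (by positivity) (by positivity),
            hsplit _ _ _ (by positivity) (by positivity) (by positivity),
            hsplit _ _ _ (by positivity) (by positivity) (by positivity)]
  -- measurability of f
  have hu_cont : Continuous u := hlip.continuous
  have hf_meas : Measurable f := by
    refine Measurable.mul ?_ ?_
    · exact ((hφn.comp measurable_fst).mul (hφn.comp measurable_snd)).div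
        (((measurable_fst.sub measurable_snd).norm).pow_const 4)
    · exact (((hu_cont.comp ((continuous_fst.norm).div_const R)).sub
        (hu_cont.comp ((continuous_snd.norm).div_const R))).measurable).pow_const 2
  have hf_nonneg : ∀ p : E3 × E3, 0 ≤ f p := fun p =>
    mul_nonneg (div_nonneg (mul_nonneg (norm_nonneg _) (norm_nonneg _)) (by positivity))
      (sq_nonneg _)
  have eq1 : ∫ p in S, f p = (∫⁻ p in S, ENNReal.ofReal (f p)).toReal :=
    integral_eq_lintegral_of_nonneg_ae (Filter.Eventually.of_forall hf_nonneg)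
      hf_meas.aestronglyMeasurable.restrict
  set I0 : ℝ≥0∞ := ∫⁻ w : E3, G w with hI0
  have hIeq : I0 = ∫⁻ w : E3 in Metric.ball (0 : E3) (R / 4), ENNReal.ofReal ((‖w‖ ^ 2)⁻¹) :=
    lintegral_indicator measurableSet_ball _
  have hI : I0 ≤ ENNReal.ofReal (2 * R) * volume (Metric.ball (0 : E3) 1) := by
    rw [hIeq]
    refine (ball_inv_sq_lintegral (by linarith)).trans_eq ?_
    congr 2
    ring
  have hV_fin : volume (Metric.ball (0 : E3) 1) ≠ ∞ := measure_ball_lt_top.ne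
  have hI_fin : I0 ≠ ∞ :=
    (hI.trans_lt (ENNReal.mul_lt_top ENNReal.ofReal_lt_top measure_ball_lt_top)).ne
  have hInt : Integrable (fun y : E3 => ‖φ y‖ ^ 2) := by
    have h2 := hφ.integrable_norm_rpow (by norm_num) (by norm_num)
    simp only [ENNReal.toReal_ofNat] at h2
    exact h2.congr (Filter.Eventually.of_forall fun y => by
      simp only [Real.rpow_two])
  set N : ℝ := ∫ y : E3, ‖φ y‖ ^ 2 with hN
  set NU : ℝ := ∫ z in U, ‖φ z‖ ^ 2 with hNU
  have hN0 : 0 ≤ N := integral_nonneg fun y => sq_nonneg _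
  have hNU0 : 0 ≤ NU := integral_nonneg fun y => sq_nonneg _
  have hT : ∫⁻ y : E3, A y = ENNReal.ofReal N :=
    (ofReal_integral_eq_lintegral_ofReal hInt
      (Filter.Eventually.of_forall fun y => sq_nonneg _)).symm
  have hTU : ∫⁻ z in U, A z = ENNReal.ofReal NU :=
    (ofReal_integral_eq_lintegral_ofReal hInt.integrableOn
      (Filter.Eventually.of_forall fun z => sq_nonneg _)).symm
  have hGsym : ∀ y z : E3, G (y - z) = G (z - y) := by
    intro y z
    rcases lt_or_ge ‖y - z‖ (R / 4) with hmem | hmem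
    · simp only [hGdef]
      rw [Set.indicator_of_mem (by simpa [Metric.mem_ball, dist_zero_right] using hmem),
        Set.indicator_of_mem (by
          simpa [Metric.mem_ball, dist_zero_right, ← norm_sub_rev y z] using hmem)]
      rw [norm_sub_rev y z]
    · simp only [hGdef]
      rw [Set.indicator_of_notMem (by
          simpa [Metric.mem_ball, dist_zero_right] using not_lt.2 hmem),
        Set.indicator_of_notMem (by
          simpa [Metric.mem_ball, dist_zero_right, ← norm_sub_rev y z] using not_lt.2 hmem)]
  have e1 : ∫⁻ p : E3 × E3, H1 p = c1 * I0 * ENNReal.ofReal N := by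
    rw [Measure.volume_eq_prod, lintegral_prod _ hm1.aemeasurable]
    simp only [hH1]
    have inner : ∀ y : E3, ∫⁻ z : E3, c1 * A y * G (y - z) = c1 * A y * I0 := by
      intro y
      have hgz : Measurable fun z : E3 => G (y - z) :=
        hG_meas.comp (measurable_const.sub measurable_id)
      rw [lintegral_const_mul _ hgz]
      congr 1
      calc ∫⁻ z : E3, G (y - z) = ∫⁻ z : E3, G (z - y) := by simp_rw [hGsym y]
        _ = I0 := lintegral_sub_right_eq_self G y
    simp_rw [inner, show ∀ y : E3, c1 * A y * I0 = c1 * I0 * A y from fun y => by ring]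
    rw [lintegral_const_mul _ hA_meas, hT]
  have e2 : ∫⁻ p : E3 × E3, H2 p = c2 * I0 * ENNReal.ofReal NU := by
    rw [Measure.volume_eq_prod, lintegral_prod_symm _ hm2.aemeasurable]
    simp only [hH2]
    have inner : ∀ z : E3, ∫⁻ y : E3, c2 * U.indicator A z * G (y - z)
        = c2 * U.indicator A z * I0 := by
      intro z
      have hgy : Measurable fun y : E3 => G (y - z) :=
        hG_meas.comp (measurable_id.sub measurable_const)
      rw [lintegral_const_mul _ hgy]
      congr 1
      exact lintegral_sub_right_eq_self G z
    simp_rw [inner,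
      show ∀ z : E3, c2 * U.indicator A z * I0 = c2 * I0 * U.indicator A z from fun z => by ring]
    rw [lintegral_const_mul _ (hA_meas.indicator hU_meas), lintegral_indicator hU_meas, hTU]
  have h1fin : c1 * I0 * ENNReal.ofReal N ≠ ∞ :=
    ENNReal.mul_ne_top (ENNReal.mul_ne_top ENNReal.ofReal_ne_top hI_fin) ENNReal.ofReal_ne_top
  have h2fin : c2 * I0 * ENNReal.ofReal NU ≠ ∞ :=
    ENNReal.mul_ne_top (ENNReal.mul_ne_top ENNReal.ofReal_ne_top hI_fin) ENNReal.ofReal_ne_top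
  have hle1 : ∫⁻ p in S, ENNReal.ofReal (f p)
      ≤ c1 * I0 * ENNReal.ofReal N + c2 * I0 * ENNReal.ofReal NU := by
    refine le_trans (le_trans (setLIntegral_mono (hm1.add hm2) hpoint)
      (setLIntegral_le_lintegral _ _)) ?_
    simp only [Pi.add_apply]; rw [lintegral_add_left hm1, e1, e2]
  have hI0t : I0.toReal ≤ 2 * R * Vr := by
    have h := ENNReal.toReal_mono (ENNReal.mul_ne_top ENNReal.ofReal_ne_top hV_fin) hI
    rwa [ENNReal.toReal_mul, ENNReal.toReal_ofReal (by positivity)] at h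
  have hc1t : c1.toReal = L ^ 2 / (2 * R ^ 2) * ε := ENNReal.toReal_ofReal (by positivity)
  have hc2t : c2.toReal = L ^ 2 / (2 * R ^ 2) * ε⁻¹ := ENNReal.toReal_ofReal (by positivity)
  calc ∫ p in S, f p = (∫⁻ p in S, ENNReal.ofReal (f p)).toReal := eq1
    _ ≤ (c1 * I0 * ENNReal.ofReal N + c2 * I0 * ENNReal.ofReal NU).toReal :=
        ENNReal.toReal_mono (by exact ENNReal.add_ne_top.2 ⟨h1fin, h2fin⟩) hle1
    _ = c1.toReal * I0.toReal * N + c2.toReal * I0.toReal * NU := by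
        rw [ENNReal.toReal_add h1fin h2fin, ENNReal.toReal_mul, ENNReal.toReal_mul,
          ENNReal.toReal_mul, ENNReal.toReal_mul, ENNReal.toReal_ofReal hN0,
          ENNReal.toReal_ofReal hNU0]
    _ ≤ ((L ^ 2 * Vr + 1) * ε / R) * N + ((L ^ 2 * Vr + 1) / (ε * R)) * NU := by
        have hI0t0 : 0 ≤ I0.toReal := ENNReal.toReal_nonneg
        have term1 : c1.toReal * I0.toReal * N ≤ ((L ^ 2 * Vr + 1) * ε / R) * N := by
          refine mul_le_mul_of_nonneg_right ?_ hN0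
          calc c1.toReal * I0.toReal ≤ c1.toReal * (2 * R * Vr) := by
                refine mul_le_mul_of_nonneg_left hI0t (by rw [hc1t]; positivity)
            _ = (L ^ 2 * Vr) * ε / R := by rw [hc1t]; field_simp
            _ ≤ (L ^ 2 * Vr + 1) * ε / R := by gcongr; linarith
        have term2 : c2.toReal * I0.toReal * NU ≤ ((L ^ 2 * Vr + 1) / (ε * R)) * NU := by
          refine mul_le_mul_of_nonneg_right ?_ hNU0
          calc c2.toReal * I0.toReal ≤ c2.toReal * (2 * R * Vr) := by
                refine mul_le_mul_of_nonneg_left hI0t (by rw [hc2t]; positivity)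
            _ = (L ^ 2 * Vr) / (ε * R) := by rw [hc2t]; field_simp
            _ ≤ (L ^ 2 * Vr + 1) / (ε * R) := by gcongr; linarith
        linarith

theorem region_three_estimate
    (u : ℝ → ℝ) (hu_smooth : ContDiff ℝ 1 u)
    (hu_range : ∀ x, 0 ≤ u x ∧ u x ≤ 1)
    (hu_deriv : ∃ L : ℝ, ∀ x, |deriv u x| ≤ L) :
    ∃ c : ℝ, ∀ R > (0 : ℝ), ∀ ε > (0 : ℝ), ∀ φ : E3 → ℂ, MemLp φ 2 →
      ∫ p in {p : E3 × E3 | ‖p.1‖ ≤ ‖p.2‖ ∧ R / 2 < ‖p.2‖ ∧ ‖p.1 - p.2‖ < R / 4},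
          ‖φ p.1‖ * ‖φ p.2‖ / ‖p.1 - p.2‖ ^ 4 * (u (‖p.1‖ / R) - u (‖p.2‖ / R)) ^ 2
      ≤ (c * ε / R) * (∫ y : E3, ‖φ y‖ ^ 2)
          + (c / (ε * R)) * ∫ z in {z : E3 | R / 4 < ‖z‖}, ‖φ z‖ ^ 2 := by
  obtain ⟨L, hL⟩ := hu_deriv
  have hL0 : 0 ≤ L := (abs_nonneg _).trans (hL 0)
  have hlip : LipschitzWith L.toNNReal u :=
    lipschitzWith_of_nnnorm_deriv_le (hu_smooth.differentiable one_ne_zero) fun x => by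
      rw [← NNReal.coe_le_coe, coe_nnnorm, Real.coe_toNNReal L hL0]
      exact hL x
  refine ⟨L ^ 2 * (volume (Metric.ball (0 : E3) 1)).toReal + 1, fun R hR ε hε φ hφ => ?_⟩
  obtain ⟨ψ, hψm, hψeq⟩ : ∃ ψ : E3 → ℂ, StronglyMeasurable ψ ∧ φ =ᵐ[volume] ψ :=
    ⟨hφ.1.mk φ, hφ.1.stronglyMeasurable_mk, hφ.1.ae_eq_mk⟩
  have hψℒ : MemLp ψ 2 := MemLp.ae_eq hψeq hφ
  have h1 := Measure.quasiMeasurePreserving_fst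
    (μ := (volume : Measure E3)) (ν := (volume : Measure E3)) |>.ae_eq_comp hψeq
  have h2 := Measure.quasiMeasurePreserving_snd
    (μ := (volume : Measure E3)) (ν := (volume : Measure E3)) |>.ae_eq_comp hψeq
  rw [← Measure.volume_eq_prod] at h1 h2
  have hpair : (fun p : E3 × E3 =>
      ‖φ p.1‖ * ‖φ p.2‖ / ‖p.1 - p.2‖ ^ 4 * (u (‖p.1‖ / R) - u (‖p.2‖ / R)) ^ 2)
      =ᵐ[volume] (fun p : E3 × E3 =>
      ‖ψ p.1‖ * ‖ψ p.2‖ / ‖p.1 - p.2‖ ^ 4 * (u (‖p.1‖ / R) - u (‖p.2‖ / R)) ^ 2) := by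
    filter_upwards [h1, h2] with p hp1 hp2
    simp only [Function.comp] at hp1 hp2
    rw [hp1, hp2]
  have hsq : (fun y : E3 => ‖φ y‖ ^ 2) =ᵐ[volume] fun y : E3 => ‖ψ y‖ ^ 2 := by
    filter_upwards [hψeq] with y hy
    rw [hy]
  rw [integral_congr_ae (ae_restrict_of_ae hpair), integral_congr_ae hsq,
    integral_congr_ae (ae_restrict_of_ae hsq)]
  exact key_estimate L hL0 u hlip hR hε ψ hψm hψℒ
end
end

section
/- For any ε' > 0, the function k ↦ |∇_k ( ε_{λ,i}(k) ζ(|k|) |k|^{-1/2} )| belongs to L^{2−ε'}(ℝ³), where ε_{λ,i} is the i-th component of the polarization vector ε_λ and ζ ∈ C¹ with compact support. -/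
open MeasureTheory Real

noncomputable section

/-- Key estimate for the case where `h k = 0` but the product `w * h` happens to be
differentiable even though `w` is not: the derivative of the product is controlled by the
derivative of `h`, using that `w` is bounded by `1`. -/
lemma aux_fderiv_mul_bound {E : Type*} [NormedAddCommGroup E] [NormedSpace ℝ E]
    {w h : E → ℝ} (hw : ∀ x, |w x| ≤ 1) {k : E} {Lh : E →L[ℝ] ℝ}
    (hh0 : h k = 0) (hLh : HasFDerivAt h Lh k)
    (hf : DifferentiableAt ℝ (fun x => w x * h x) k) :
    ‖fderiv ℝ (fun x => w x * h x) k‖ ≤ ‖Lh‖ := by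
  refine ContinuousLinearMap.opNorm_le_bound _ (norm_nonneg _) fun v => ?_
  have hL := (hf.hasFDerivAt.lim_real v).norm
  have hLh' := (hLh.lim_real v).norm
  have key : ∀ c : ℝ, ‖c • ((fun x => w x * h x) (k + c⁻¹ • v) - (fun x => w x * h x) k)‖
      ≤ ‖c • (h (k + c⁻¹ • v) - h k)‖ := by
    intro c
    simp only [hh0, mul_zero, sub_zero, norm_smul]
    gcongr
    rw [Real.norm_eq_abs, Real.norm_eq_abs, abs_mul]
    exact mul_le_of_le_one_left (abs_nonneg _) (hw _)
  calc ‖(fderiv ℝ (fun x => w x * h x) k) v‖ ≤ ‖Lh v‖ := le_of_tendsto_of_tendsto' hL hLh' key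
    _ ≤ ‖Lh‖ * ‖v‖ := Lh.le_opNorm v

/-- `|t| ^ (-q)` restricted to `[-R, R]` is integrable when `q < 1`. -/
lemma aux_integrable_chi {R q : ℝ} (hR : 0 ≤ R) (hq : q < 1) :
    Integrable (Set.indicator (Set.Icc (-R) R) (fun t : ℝ => |t| ^ (-q))) := by
  rw [integrable_indicator_iff measurableSet_Icc]
  have J1 : IntervalIntegrable (fun t : ℝ => |t| ^ (-q)) volume 0 R := by
    have h0 := intervalIntegral.intervalIntegrable_rpow' (a := 0) (b := R)
      (by linarith : (-1:ℝ) < -q)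
    rw [intervalIntegrable_iff] at h0 ⊢
    rw [Set.uIoc_of_le hR] at h0 ⊢
    exact h0.congr_fun (fun t ht => by rw [abs_of_pos ht.1]) measurableSet_Ioc
  have J2 : IntervalIntegrable (fun t : ℝ => |t| ^ (-q)) volume (-R) 0 := by
    have := (IntervalIntegrable.iff_comp_neg).mp J1.symm
    simp only [abs_neg, neg_zero] at this
    exact this
  have J := J2.trans J1
  rw [intervalIntegrable_iff, Set.uIoc_of_le (by linarith : -R ≤ R)] at J
  rwa [integrableOn_Icc_iff_integrableOn_Ioc]

/-- A product of one variable integrable functions of the coordinates is integrable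
on euclidean space. -/
lemma aux_integrable_prod_coords {ψ : ℝ → ℝ} (hψ : Integrable ψ) :
    Integrable (fun k : EuclideanSpace ℝ (Fin 3) => ∏ i, ψ (k i)) := by
  have h1 : Integrable (fun x : Fin 3 → ℝ => ∏ i, ψ (x i)) :=
    Integrable.fintype_prod (f := fun _ => ψ) (fun _ => hψ)
  exact ((EuclideanSpace.volume_preserving_symm_measurableEquiv_toLp (Fin 3)).integrable_comp_emb
    (MeasurableEquiv.toLp 2 (Fin 3 → ℝ)).symm.measurableEmbedding).mpr h1

/-- Measurability of `t ↦ |t| ^ a` for `a ≠ 0`. -/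
lemma aux_measurable_abs_rpow {a : ℝ} (ha : a ≠ 0) : Measurable fun t : ℝ => |t| ^ a := by
  have heq : (fun t : ℝ => |t| ^ a)
      = fun t => if |t| = 0 then 0 else Real.exp (Real.log |t| * a) := by
    funext t
    split_ifs with h
    · rw [h, Real.zero_rpow ha]
    · rw [Real.rpow_def_of_pos (lt_of_le_of_ne (abs_nonneg t) (Ne.symm h))]
  rw [heq]
  refine Measurable.ite ?_ measurable_const
    (Real.measurable_exp.comp ((Real.measurable_log.comp measurable_abs).mul_const a))
  exact measurable_abs (measurableSet_singleton 0)

set_option maxHeartbeats 1000000 in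
/-- The gradient of `k ↦ ε_{λ,i}(k) ζ(|k|) |k|^{-1/2}` lies in `L^{2−ε'}(ℝ³)` for any `ε' > 0`.
Here `w` is the `i`-th component of the polarization vector. -/
theorem gradient_in_L2_minus
    (w : E3 → ℝ) (hw_bd : ∀ k, |w k| ≤ 1)
    (cw : ℝ)
    (hw_grad : ∀ k : E3, (k 0) ^ 2 + (k 1) ^ 2 ≠ 0 →
      ‖fderiv ℝ w k‖ ≤ cw / Real.sqrt ((k 0) ^ 2 + (k 1) ^ 2))
    (ζ : ℝ → ℝ) (hζ : ContDiff ℝ 1 ζ) (hζc : HasCompactSupport ζ) :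
    ∀ ε' > (0 : ℝ),
      MemLp
        (fun k : E3 =>
          ‖fderiv ℝ (fun k' : E3 => w k' * ζ ‖k'‖ * ‖k'‖ ^ (-(1 / 2) : ℝ)) k‖)
        (ENNReal.ofReal (2 - ε')) := by
  intro ε' hε'
  classical
  set h : E3 → ℝ := fun x => ζ ‖x‖ * ‖x‖ ^ (-(1 / 2) : ℝ) with hh_def
  have hfh : (fun k' : E3 => w k' * ζ ‖k'‖ * ‖k'‖ ^ (-(1 / 2) : ℝ)) = fun x => w x * h x := by
    funext x; simp only [hh_def]; ring
  rw [hfh]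
  have hFmeas : AEStronglyMeasurable (fun k : E3 => ‖fderiv ℝ (fun x => w x * h x) k‖) volume :=
    ((measurable_fderiv ℝ _).norm).aestronglyMeasurable
  rcases le_or_gt (2 - ε') 0 with hp0 | hp0
  · rw [ENNReal.ofReal_eq_zero.mpr hp0]
    exact memLp_zero_iff_aestronglyMeasurable.mpr hFmeas
  set p : ℝ := 2 - ε' with hp_def
  have hp2 : p < 2 := by rw [hp_def]; linarith
  -- bounds on ζ and its derivative
  obtain ⟨t0, ht0⟩ := (hζ.continuous.abs).exists_forall_ge_of_hasCompactSupport hζc.abs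
  set Mζ : ℝ := |ζ t0| with hMζ_def
  have hMζ : ∀ t, |ζ t| ≤ Mζ := ht0
  have hMζ0 : 0 ≤ Mζ := abs_nonneg _
  obtain ⟨t1, ht1⟩ := ((hζ.continuous_deriv le_rfl).abs).exists_forall_ge_of_hasCompactSupport
    hζc.deriv.abs
  set Mζ' : ℝ := |deriv ζ t1| with hMζ'_def
  have hMζ' : ∀ t, |deriv ζ t| ≤ Mζ' := ht1
  have hMζ'0 : 0 ≤ Mζ' := abs_nonneg _
  -- the support radius
  obtain ⟨r, hr⟩ := hζc.isBounded.subset_closedBall 0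
  set R : ℝ := max r 1 with hR_def
  have hR1 : (1:ℝ) ≤ R := le_max_right _ _
  have hR0 : (0:ℝ) ≤ R := le_trans zero_le_one hR1
  have hζR : ∀ t : ℝ, R < |t| → ζ t = 0 := by
    intro t ht
    apply image_eq_zero_of_notMem_tsupport
    intro hmem
    have := hr hmem
    rw [Metric.mem_closedBall, Real.dist_0_eq_abs] at this
    have : |t| ≤ R := le_trans this (le_max_left _ _)
    linarith
  -- cw is nonnegative
  have hcw : 0 ≤ cw := by
    have h1 : ((EuclideanSpace.single (0 : Fin 3) (1:ℝ)) 0) ^ 2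
        + ((EuclideanSpace.single (0 : Fin 3) (1:ℝ)) 1) ^ 2 = 1 := by
      simp [EuclideanSpace.single_apply]
    have h2 := hw_grad (EuclideanSpace.single (0 : Fin 3) (1:ℝ)) (by rw [h1]; norm_num)
    rw [h1, Real.sqrt_one, div_one] at h2
    exact le_trans (norm_nonneg _) h2
  -- the dominating function
  set χ : ℝ → ℝ := Set.indicator (Set.Icc (-R) R) (fun t => |t| ^ (-(1/2) : ℝ)) with hχ_def
  have hχ_nonneg : ∀ t, 0 ≤ χ t :=
    fun t => Set.indicator_nonneg (fun s _ => Real.rpow_nonneg (abs_nonneg s) _) t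
  set C : ℝ := Mζ * cw + (Mζ' * R + Mζ * (1/2)) with hC_def
  have hC0 : 0 ≤ C := by positivity
  set g : E3 → ℝ := fun k => C * ∏ i, χ (k i) with hg_def
  have hg_nonneg : ∀ k, 0 ≤ g k := fun k =>
    mul_nonneg hC0 (Finset.prod_nonneg fun i _ => hχ_nonneg _)
  -- membership of the dominating function in L^p
  have hχmeas : Measurable χ :=
    (aux_measurable_abs_rpow (by norm_num)).indicator measurableSet_Icc
  have hcoordmeas : ∀ i : Fin 3, Measurable (fun k : E3 => k i) := by
    intro i
    exact (EuclideanSpace.proj (𝕜 := ℝ) i).continuous.measurable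
  have hprodmeas : AEStronglyMeasurable (fun k : E3 => ∏ i, χ (k i)) volume :=
    (Finset.measurable_prod Finset.univ fun i _ => hχmeas.comp (hcoordmeas i)).aestronglyMeasurable
  have hP0 : (ENNReal.ofReal p) ≠ 0 := by
    simp only [ne_eq, ENNReal.ofReal_eq_zero, not_le]; exact hp0
  have hPtop : (ENNReal.ofReal p) ≠ ⊤ := ENNReal.ofReal_ne_top
  have hPtoReal : (ENNReal.ofReal p).toReal = p := ENNReal.toReal_ofReal hp0.le
  have hψint : Integrable (fun t : ℝ => χ t ^ p) := by
    have heq : (fun t : ℝ => χ t ^ p)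
        = Set.indicator (Set.Icc (-R) R) (fun t : ℝ => |t| ^ (-(p/2))) := by
      funext t
      by_cases ht : t ∈ Set.Icc (-R) R
      · rw [hχ_def, Set.indicator_of_mem ht, Set.indicator_of_mem ht,
          ← Real.rpow_mul (abs_nonneg t)]
        congr 1
        ring
      · rw [hχ_def, Set.indicator_of_notMem ht, Set.indicator_of_notMem ht,
          Real.zero_rpow hp0.ne']
    rw [heq]
    exact aux_integrable_chi hR0 (by linarith)
  have hgmem : MemLp g (ENNReal.ofReal p) volume := by
    have hiff := memLp_norm_rpow_iff (p := ENNReal.ofReal p) (q := ENNReal.ofReal p)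
      hprodmeas hP0 hPtop
    rw [ENNReal.div_self hP0 hPtop] at hiff
    refine MemLp.const_mul ?_ C
    refine hiff.mp ?_
    rw [memLp_one_iff_integrable]
    have heq : (fun k : E3 => ‖∏ i, χ (k i)‖ ^ (ENNReal.ofReal p).toReal)
        = fun k : E3 => ∏ i, χ (k i) ^ p := by
      funext k
      rw [hPtoReal, Real.norm_eq_abs,
        abs_of_nonneg (Finset.prod_nonneg fun i _ => hχ_nonneg _),
        Real.finset_prod_rpow _ _ (fun i _ => hχ_nonneg _) p]
    rw [heq]
    exact aux_integrable_prod_coords hψint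
  -- the a.e. bound
  have hzeroset : ∀ i : Fin 3, volume {k : E3 | k i = 0} = 0 := by
    intro i
    have hset : {k : E3 | k i = 0}
        = (LinearMap.ker (EuclideanSpace.projₗ (𝕜 := ℝ) (ι := Fin 3) i) : Set E3) := by
      ext k
      simp [LinearMap.mem_ker]
    rw [hset]
    apply Measure.addHaar_submodule
    intro htop
    have h1 : (EuclideanSpace.single (i : Fin 3) (1:ℝ)) ∈
        LinearMap.ker (EuclideanSpace.projₗ (𝕜 := ℝ) (ι := Fin 3) i) := by
      rw [htop]; trivial
    rw [LinearMap.mem_ker] at h1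
    simp [PiLp.proj_apply, EuclideanSpace.single_apply] at h1
  have hae : ∀ᵐ k : E3, k 0 ≠ 0 ∧ k 1 ≠ 0 ∧ k 2 ≠ 0 := by
    have h0 : ∀ᵐ k : E3, k 0 ≠ 0 := by
      rw [ae_iff]; simpa using hzeroset 0
    have h1 : ∀ᵐ k : E3, k 1 ≠ 0 := by
      rw [ae_iff]; simpa using hzeroset 1
    have h2 : ∀ᵐ k : E3, k 2 ≠ 0 := by
      rw [ae_iff]; simpa using hzeroset 2
    exact h0.and (h1.and h2)
  -- pointwise bound
  have hbound : ∀ᵐ k : E3,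
      ‖‖fderiv ℝ (fun x => w x * h x) k‖‖ ≤ ‖g k‖ := by
    filter_upwards [hae] with k hk
    obtain ⟨hk0, hk1, hk2⟩ := hk
    rw [Real.norm_eq_abs, abs_of_nonneg (norm_nonneg _), Real.norm_eq_abs]
    refine le_trans ?_ (le_abs_self _)
    -- now prove ‖fderiv f k‖ ≤ g k
    have hcoord : ∀ i : Fin 3, |k i| ≤ ‖k‖ := by
      intro i
      rw [EuclideanSpace.norm_eq, ← Real.sqrt_sq_eq_abs]
      apply Real.sqrt_le_sqrt
      calc (k i)^2 = ‖k i‖^2 := by rw [Real.norm_eq_abs, sq_abs]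
        _ ≤ ∑ j, ‖k j‖^2 :=
            Finset.single_le_sum (f := fun j => ‖k j‖^2) (fun j _ => sq_nonneg _)
              (Finset.mem_univ i)
    have hknorm : 0 < ‖k‖ := lt_of_lt_of_le (abs_pos.mpr hk0) (hcoord 0)
    rcases lt_or_ge R ‖k‖ with hkR | hkR
    · -- outside the support: the function vanishes near k
      have hev : (fun x => w x * h x) =ᶠ[nhds k] (fun _ => (0:ℝ)) := by
        have hopen : IsOpen {x : E3 | R < ‖x‖} := isOpen_lt continuous_const continuous_norm
        filter_upwards [hopen.mem_nhds hkR] with x hx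
        have : ζ ‖x‖ = 0 := hζR _ (by rwa [abs_of_nonneg (norm_nonneg _)])
        simp [hh_def, this]
      rw [hev.fderiv_eq, fderiv_const_apply, norm_zero]
      exact hg_nonneg k
    · -- inside the ball of radius R
      have hsum : 0 < (k 0)^2 + (k 1)^2 :=
        add_pos_of_pos_of_nonneg
          (lt_of_le_of_ne (sq_nonneg _) (Ne.symm (pow_ne_zero 2 hk0))) (sq_nonneg _)
      have hρ : 0 < Real.sqrt ((k 0)^2 + (k 1)^2) := Real.sqrt_pos.mpr hsum
      have hkne : k ≠ 0 := norm_pos_iff.mp hknorm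
      -- derivative of h at k
      have hnd : DifferentiableAt ℝ (‖·‖ : E3 → ℝ) k :=
        (contDiffAt_norm ℝ (n := 1) hkne).differentiableAt one_ne_zero
      have hN : HasFDerivAt (‖·‖ : E3 → ℝ) (fderiv ℝ (‖·‖ : E3 → ℝ) k) k := hnd.hasFDerivAt
      have hNnorm : ‖fderiv ℝ (‖·‖ : E3 → ℝ) k‖ = 1 := norm_fderiv_norm hnd
      have hζd : HasDerivAt ζ (deriv ζ ‖k‖) ‖k‖ :=
        ((hζ.differentiable one_ne_zero) ‖k‖).hasDerivAt
      have hrd : HasDerivAt (fun r : ℝ => r ^ (-(1/2) : ℝ))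
          (-(1/2) * ‖k‖ ^ ((-(1/2) : ℝ) - 1)) ‖k‖ :=
        Real.hasDerivAt_rpow_const (Or.inl hknorm.ne')
      have hφ := hζd.mul hrd
      set D : ℝ := deriv ζ ‖k‖ * ‖k‖ ^ (-(1/2) : ℝ)
        + ζ ‖k‖ * (-(1/2) * ‖k‖ ^ ((-(1/2) : ℝ) - 1)) with hD_def
      have hhd : HasFDerivAt h (D • fderiv ℝ (‖·‖ : E3 → ℝ) k) k :=
        hφ.comp_hasFDerivAt k hN
      have h2 : (0:ℝ) ≤ ‖k‖ ^ (-(1/2):ℝ) := Real.rpow_nonneg (norm_nonneg k) _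
      have hsub1 : ‖k‖ ^ ((-(1/2):ℝ) - 1) = ‖k‖ ^ (-(1/2):ℝ) * ‖k‖⁻¹ := by
        rw [Real.rpow_sub hknorm, Real.rpow_one, div_eq_mul_inv]
      have hLnorm : ‖D • fderiv ℝ (‖·‖ : E3 → ℝ) k‖
          ≤ Mζ' * ‖k‖ ^ (-(1/2):ℝ) + Mζ * (1/2) * (‖k‖ ^ (-(1/2):ℝ) * ‖k‖⁻¹) := by
        rw [norm_smul, hNnorm, mul_one, Real.norm_eq_abs]
        calc |D| = |deriv ζ ‖k‖ * ‖k‖ ^ (-(1/2) : ℝ)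
              + ζ ‖k‖ * (-(1/2) * ‖k‖ ^ ((-(1/2) : ℝ) - 1))| := by rw [hD_def]
          _ ≤ |deriv ζ ‖k‖ * ‖k‖ ^ (-(1/2) : ℝ)|
              + |ζ ‖k‖ * (-(1/2) * ‖k‖ ^ ((-(1/2) : ℝ) - 1))| := abs_add_le _ _
          _ = |deriv ζ ‖k‖| * (‖k‖ ^ (-(1/2) : ℝ))
              + |ζ ‖k‖| * ((1/2) * (‖k‖ ^ (-(1/2):ℝ) * ‖k‖⁻¹)) := by
              rw [abs_mul, abs_mul, abs_of_nonneg h2, abs_mul, hsub1,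
                abs_of_nonneg (mul_nonneg h2 (inv_nonneg.mpr (norm_nonneg k)))]
              norm_num
          _ ≤ Mζ' * (‖k‖ ^ (-(1/2) : ℝ)) + Mζ * ((1/2) * (‖k‖ ^ (-(1/2):ℝ) * ‖k‖⁻¹)) := by
              gcongr
              · exact hMζ' _
              · exact hMζ _
          _ = Mζ' * ‖k‖ ^ (-(1/2):ℝ) + Mζ * (1/2) * (‖k‖ ^ (-(1/2):ℝ) * ‖k‖⁻¹) := by ring
      have hhk : |h k| ≤ Mζ * ‖k‖ ^ (-(1/2):ℝ) := by
        simp only [hh_def]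
        rw [abs_mul, abs_of_nonneg h2]
        gcongr
        exact hMζ _
      -- the unified derivative bound
      have hmain : ‖fderiv ℝ (fun x => w x * h x) k‖
          ≤ |h k| * (cw / Real.sqrt ((k 0)^2 + (k 1)^2))
            + ‖D • fderiv ℝ (‖·‖ : E3 → ℝ) k‖ := by
        by_cases hdw : DifferentiableAt ℝ w k
        · rw [fderiv_fun_mul hdw hhd.differentiableAt, hhd.fderiv]
          calc ‖w k • (D • fderiv ℝ (‖·‖ : E3 → ℝ) k) + h k • fderiv ℝ w k‖
              ≤ ‖w k • (D • fderiv ℝ (‖·‖ : E3 → ℝ) k)‖ + ‖h k • fderiv ℝ w k‖ := norm_add_le _ _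
            _ = ‖w k‖ * ‖D • fderiv ℝ (‖·‖ : E3 → ℝ) k‖ + ‖h k‖ * ‖fderiv ℝ w k‖ := by
                rw [norm_smul (w k), norm_smul (h k)]
            _ ≤ 1 * ‖D • fderiv ℝ (‖·‖ : E3 → ℝ) k‖
                + ‖h k‖ * (cw / Real.sqrt ((k 0)^2 + (k 1)^2)) := by
                gcongr
                · rw [Real.norm_eq_abs]; exact hw_bd k
                · exact hw_grad k hsum.ne'
            _ = |h k| * (cw / Real.sqrt ((k 0)^2 + (k 1)^2))
                + ‖D • fderiv ℝ (‖·‖ : E3 → ℝ) k‖ := by rw [Real.norm_eq_abs]; ring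
        · by_cases hz : ζ ‖k‖ = 0
          · have hk00 : h k = 0 := by simp [hh_def, hz]
            by_cases hdf : DifferentiableAt ℝ (fun x => w x * h x) k
            · have := aux_fderiv_mul_bound hw_bd hk00 hhd hdf
              rw [hk00]
              simpa using this
            · rw [fderiv_zero_of_not_differentiableAt hdf, norm_zero]
              have : 0 ≤ |h k| * (cw / Real.sqrt ((k 0)^2 + (k 1)^2)) :=
                mul_nonneg (abs_nonneg _) (div_nonneg hcw (Real.sqrt_nonneg _))
              positivity
          · have hhkne : h k ≠ 0 := by
              simp only [hh_def]
              exact mul_ne_zero hz (by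
                have := Real.rpow_pos_of_pos hknorm (-(1/2) : ℝ)
                exact this.ne')
            have hdf : ¬ DifferentiableAt ℝ (fun x => w x * h x) k := by
              intro hdf
              apply hdw
              have hne : ∀ᶠ x in nhds k, h x ≠ 0 :=
                hhd.differentiableAt.continuousAt.eventually_ne hhkne
              have heq : w =ᶠ[nhds k] fun x => (w x * h x) * (h x)⁻¹ := by
                filter_upwards [hne] with x hx
                field_simp
              exact (hdf.mul (hhd.differentiableAt.inv hhkne)).congr_of_eventuallyEq heq
            rw [fderiv_zero_of_not_differentiableAt hdf, norm_zero]
            have : 0 ≤ |h k| * (cw / Real.sqrt ((k 0)^2 + (k 1)^2)) :=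
              mul_nonneg (abs_nonneg _) (div_nonneg hcw (Real.sqrt_nonneg _))
            positivity
      -- now convert to the dominating function
      have habs0 : 0 < |k 0| := abs_pos.mpr hk0
      have habs1 : 0 < |k 1| := abs_pos.mpr hk1
      have habs2 : 0 < |k 2| := abs_pos.mpr hk2
      have e0 : ‖k‖ ^ (-(1/2):ℝ) ≤ |k 0| ^ (-(1/2):ℝ) :=
        Real.rpow_le_rpow_of_nonpos habs0 (hcoord 0) (by norm_num)
      have e1 : ‖k‖ ^ (-(1/2):ℝ) ≤ |k 1| ^ (-(1/2):ℝ) :=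
        Real.rpow_le_rpow_of_nonpos habs1 (hcoord 1) (by norm_num)
      have e2 : ‖k‖ ^ (-(1/2):ℝ) ≤ |k 2| ^ (-(1/2):ℝ) :=
        Real.rpow_le_rpow_of_nonpos habs2 (hcoord 2) (by norm_num)
      have einv : ‖k‖⁻¹ ≤ |k 0| ^ (-(1/2):ℝ) * |k 1| ^ (-(1/2):ℝ) := by
        have : ‖k‖⁻¹ = ‖k‖ ^ (-(1/2):ℝ) * ‖k‖ ^ (-(1/2):ℝ) := by
          rw [← Real.rpow_add hknorm]
          norm_num [Real.rpow_neg_one]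
        rw [this]
        exact mul_le_mul e0 e1 h2 (Real.rpow_nonneg (abs_nonneg _) _)
      have eρ : (Real.sqrt ((k 0)^2 + (k 1)^2))⁻¹
          ≤ |k 0| ^ (-(1/2):ℝ) * |k 1| ^ (-(1/2):ℝ) := by
        have h1 : |k 0| * |k 1| ≤ (k 0)^2 + (k 1)^2 := by
          nlinarith [sq_nonneg (|k 0| - |k 1|), sq_abs (k 0), sq_abs (k 1)]
        have h3 : 0 < Real.sqrt (|k 0| * |k 1|) :=
          Real.sqrt_pos.mpr (mul_pos habs0 habs1)
        have h4 : (Real.sqrt ((k 0)^2 + (k 1)^2))⁻¹ ≤ (Real.sqrt (|k 0| * |k 1|))⁻¹ := by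
          apply inv_anti₀ h3
          exact Real.sqrt_le_sqrt h1
        refine h4.trans (le_of_eq ?_)
        rw [Real.sqrt_eq_rpow, ← Real.rpow_neg (mul_nonneg habs0.le habs1.le),
          ← Real.mul_rpow (abs_nonneg _) (abs_nonneg _)]
      have eprod : ∏ i, χ (k i) = |k 0| ^ (-(1/2):ℝ) * |k 1| ^ (-(1/2):ℝ) * |k 2| ^ (-(1/2):ℝ) := by
        rw [Fin.prod_univ_three]
        have hmem : ∀ i : Fin 3, k i ∈ Set.Icc (-R) R := by
          intro i
          rw [Set.mem_Icc, ← abs_le]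
          exact le_trans (hcoord i) hkR
        rw [hχ_def]
        rw [Set.indicator_of_mem (hmem 0), Set.indicator_of_mem (hmem 1),
          Set.indicator_of_mem (hmem 2)]
      -- abbreviations
      set A0 := |k 0| ^ (-(1/2):ℝ) with hA0
      set A1 := |k 1| ^ (-(1/2):ℝ) with hA1
      set A2 := |k 2| ^ (-(1/2):ℝ) with hA2
      have hA0n : 0 ≤ A0 := Real.rpow_nonneg (abs_nonneg _) _
      have hA1n : 0 ≤ A1 := Real.rpow_nonneg (abs_nonneg _) _
      have hA2n : 0 ≤ A2 := Real.rpow_nonneg (abs_nonneg _) _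
      -- bound 1 : ‖k‖^a * ρ⁻¹ ≤ A2 * (A0 * A1)
      have b1 : ‖k‖ ^ (-(1/2):ℝ) * (Real.sqrt ((k 0)^2 + (k 1)^2))⁻¹ ≤ A2 * (A0 * A1) :=
        mul_le_mul e2 eρ (inv_nonneg.mpr (Real.sqrt_nonneg _)) hA2n
      -- bound 2 : ‖k‖^a ≤ R * (A0 * A1 * A2)
      have b2 : ‖k‖ ^ (-(1/2):ℝ) ≤ R * (A0 * A1 * A2) := by
        have eR0 : R ^ (-(1/2):ℝ) ≤ A0 :=
          Real.rpow_le_rpow_of_nonpos habs0 (le_trans (hcoord 0) hkR) (by norm_num)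
        have eR1 : R ^ (-(1/2):ℝ) ≤ A1 :=
          Real.rpow_le_rpow_of_nonpos habs1 (le_trans (hcoord 1) hkR) (by norm_num)
        have hRpos : (0:ℝ) < R := lt_of_lt_of_le zero_lt_one hR1
        have hRR : R ^ (-(1/2):ℝ) * R ^ (-(1/2):ℝ) = R⁻¹ := by
          rw [← Real.rpow_add hRpos]
          norm_num [Real.rpow_neg_one]
        have h5 : R⁻¹ ≤ A0 * A1 := by
          rw [← hRR]
          exact mul_le_mul eR0 eR1 (Real.rpow_nonneg hR0 _) hA0n
        calc ‖k‖ ^ (-(1/2):ℝ) ≤ A2 := e2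
          _ = (R * R⁻¹) * A2 := by rw [mul_inv_cancel₀ hRpos.ne', one_mul]
          _ ≤ (R * (A0 * A1)) * A2 := by
              gcongr
          _ = R * (A0 * A1 * A2) := by ring
      -- bound 3 : ‖k‖^a * ‖k‖⁻¹ ≤ A0 * A1 * A2
      have b3 : ‖k‖ ^ (-(1/2):ℝ) * ‖k‖⁻¹ ≤ A0 * A1 * A2 := by
        calc ‖k‖ ^ (-(1/2):ℝ) * ‖k‖⁻¹ ≤ A2 * (A0 * A1) :=
            mul_le_mul e2 einv (inv_nonneg.mpr (norm_nonneg _)) hA2n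
          _ = A0 * A1 * A2 := by ring
      -- put everything together
      refine le_trans hmain ?_
      show _ ≤ C * ∏ i, χ (k i)
      rw [eprod]
      have t1 : |h k| * (cw / Real.sqrt ((k 0)^2 + (k 1)^2)) ≤ Mζ * cw * (A0 * A1 * A2) := by
        rw [div_eq_mul_inv]
        calc |h k| * (cw * (Real.sqrt ((k 0)^2 + (k 1)^2))⁻¹)
            ≤ (Mζ * ‖k‖ ^ (-(1/2):ℝ)) * (cw * (Real.sqrt ((k 0)^2 + (k 1)^2))⁻¹) := by
              gcongr
          _ = (Mζ * cw) * (‖k‖ ^ (-(1/2):ℝ) * (Real.sqrt ((k 0)^2 + (k 1)^2))⁻¹) := by ring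
          _ ≤ (Mζ * cw) * (A2 * (A0 * A1)) := by
              have := mul_nonneg hMζ0 hcw
              gcongr
          _ = Mζ * cw * (A0 * A1 * A2) := by ring
      have t2 : ‖D • fderiv ℝ (‖·‖ : E3 → ℝ) k‖ ≤ (Mζ' * R + Mζ * (1/2)) * (A0 * A1 * A2) := by
        refine le_trans hLnorm ?_
        have s1 : Mζ' * ‖k‖ ^ (-(1/2):ℝ) ≤ Mζ' * (R * (A0 * A1 * A2)) := by gcongr
        have s2 : Mζ * (1/2) * (‖k‖ ^ (-(1/2):ℝ) * ‖k‖⁻¹) ≤ Mζ * (1/2) * (A0 * A1 * A2) := by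
          gcongr
        nlinarith [s1, s2]
      calc |h k| * (cw / Real.sqrt ((k 0)^2 + (k 1)^2)) + ‖D • fderiv ℝ (‖·‖ : E3 → ℝ) k‖
          ≤ Mζ * cw * (A0 * A1 * A2) + (Mζ' * R + Mζ * (1/2)) * (A0 * A1 * A2) :=
            add_le_add t1 t2
        _ = C * (A0 * A1 * A2) := by rw [hC_def]; ring
  exact MemLp.of_le hgmem hFmeas hbound
end
end
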